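/- Every m-rigid set A ⊆ ω is bi-immune: neither A nor its complement ω \ A has an infinite computable subset. -/

import Mathlib

/-- `A` is m-rigid: every total computable m-autoreduction of `A`
(i.e. `k` with `∀ x, x ∈ A ↔ k x ∈ A`) is eventually the identity. -/
def MRigid (A : Set ℕ) : Prop :=
  ∀ k : ℕ → ℕ, Computable k → (∀ x, x ∈ A ↔ k x ∈ A) → {x | k x ≠ x}.Finite

lemma mrigid_aux (A : Set ℕ) (hA : MRigid A) (S : Set ℕ)
    (hc : ComputablePred (· ∈ S)) (hi : S.Infinite)
    (hS : ∀ x ∈ S, ∀ y ∈ S, (x ∈ A ↔ y ∈ A)) : False := by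
  obtain ⟨f, hf, hfS⟩ := ComputablePred.computable_iff.1 hc
  have hmem : ∀ n, n ∈ S ↔ f n = true := by
    intro n; rw [show (n ∈ S) = (f n = true) from congrFun hfS n]
  -- the search predicate
  set q : ℕ → ℕ → Bool := fun a n => decide (a < n) && f n with hq
  have hex : ∀ a, ∃ n, q a n = true := by
    intro a
    obtain ⟨b, hbS, hab⟩ := hi.exists_gt a
    exact ⟨b, by simp [hq, hab, (hmem b).1 hbS]⟩
  -- the "next element of S" function
  set g : ℕ → ℕ := fun a => Nat.find (hex a) with hg
  have hgmem : ∀ a, g a ∈ Nat.rfind fun n => Part.some (q a n) := by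
    intro a
    refine Nat.mem_rfind.2 ?_
    constructor
    · simpa using Nat.find_spec (hex a)
    · intro m hm
      simpa using Nat.find_min (hex a) hm
  have hgc : Computable g := by
    have hq2 : Computable₂ q := by
      have h1 : Computable fun p : ℕ × ℕ => decide (p.1 < p.2) :=
        (Primrec.nat_lt.comp Primrec.fst Primrec.snd).decide.to_comp
      have h2 : Computable fun p : ℕ × ℕ => f p.2 := hf.comp Computable.snd
      exact (Primrec.and.to_comp.comp h1 h2 : _)
    have : Partrec fun a => Nat.rfind fun n => Part.some (q a n) :=
      Partrec.rfind (hq2.partrec₂)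
    exact this.of_eq_tot hgmem
  have hgS : ∀ a, g a ∈ S ∧ a < g a := by
    intro a
    have h : (decide (a < Nat.find (hex a)) && f (Nat.find (hex a))) = true :=
      Nat.find_spec (hex a)
    rw [Bool.and_eq_true, decide_eq_true_eq] at h
    change Nat.find (hex a) ∈ S ∧ a < Nat.find (hex a)
    exact ⟨(hmem _).2 h.2, h.1⟩
  -- k: jump within S, identity outside
  classical
  set k : ℕ → ℕ := fun a => bif f a then g a else a with hk
  have hkc : Computable k := Computable.cond hf hgc (Computable.id)
  have hauto : ∀ x, x ∈ A ↔ k x ∈ A := by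
    intro x
    by_cases hx : f x = true
    · have hxS : x ∈ S := (hmem x).2 hx
      simp only [hk, hx, cond_true]
      exact hS x hxS (g x) (hgS x).1
    · simp [hk, hx]
  have hfin := hA k hkc hauto
  have : S ⊆ {x | k x ≠ x} := by
    intro x hxS
    have hx : f x = true := (hmem x).1 hxS
    simp only [hk, hx, cond_true, Set.mem_setOf_eq]
    exact Nat.ne_of_gt (hgS x).2
  exact hi (hfin.subset this)

/-- Every m-rigid set is bi-immune: neither `A` nor its complement has an
infinite computable subset. -/
theorem stmt_1 (A : Set ℕ) (hA : MRigid A) :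
    (¬ ∃ S : Set ℕ, ComputablePred (· ∈ S) ∧ S.Infinite ∧ S ⊆ A) ∧
    (¬ ∃ S : Set ℕ, ComputablePred (· ∈ S) ∧ S.Infinite ∧ S ⊆ Aᶜ) := by
  constructor
  · rintro ⟨S, hc, hi, hsub⟩
    exact mrigid_aux A hA S hc hi fun x hx y hy =>
      iff_of_true (hsub hx) (hsub hy)
  · rintro ⟨S, hc, hi, hsub⟩
    exact mrigid_aux A hA S hc hi fun x hx y hy =>
      iff_of_false (hsub hx) (hsub hy)
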